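/- Let G be a finite group and X a finite G-set. If for each prime p the permutation module 𝔽_p X over the group algebra 𝔽_p G has the double centraliser property, then the permutation module ℤX over the integral group algebra ℤG has the double centraliser property. -/

import Mathlib

/-- The double centraliser property: every additive endomorphism of `P` commuting with all
`R`-linear endomorphisms of `P` is given by the action of an element of `R` (i.e. the natural
map `R → DEnd_R(P)` is surjective). -/
def HasDCP (R : Type*) [Ring R] (P : Type*) [AddCommGroup P] [Module R P] : Prop :=
  ∀ σ : P →+ P, (∀ (α : P →ₗ[R] P) (p : P), σ (α p) = α (σ p)) → ∃ r : R, ∀ p : P, σ p = r • p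

section Perm

variable (S : Type*) [CommRing S] (G : Type*) [Group G] (X : Type*) [MulAction G X]

/-- The action of `G` on the free module `X →₀ S` permuting the basis `X`,
as a monoid homomorphism into the endomorphism monoid. -/
noncomputable def permRep : G →* Module.End S (X →₀ S) where
  toFun g := Finsupp.lmapDomain S S (fun x => g • x)
  map_one' := by
    show Finsupp.lmapDomain S S (fun x : X => (1 : G) • x) = 1
    have : (fun x : X => (1 : G) • x) = id := funext fun x => one_smul G x
    rw [this, Finsupp.lmapDomain_id]; rfl
  map_mul' g h := by
    show Finsupp.lmapDomain S S (fun x : X => (g * h) • x)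
      = Finsupp.lmapDomain S S (fun x : X => g • x) * Finsupp.lmapDomain S S (fun x : X => h • x)
    have : (fun x : X => (g * h) • x) = (fun x => g • x) ∘ (fun x => h • x) :=
      funext fun x => mul_smul g h x
    rw [this, Finsupp.lmapDomain_comp]; rfl

/-- The algebra homomorphism `S[G] → End_S(SX)` defining the permutation module. -/
noncomputable def permAlgHom : MonoidAlgebra S G →ₐ[S] Module.End S (X →₀ S) :=
  MonoidAlgebra.lift S _ G (permRep S G X)

/-- The permutation module structure on the free `S`-module `X →₀ S` over the
group algebra `MonoidAlgebra S G`. -/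
noncomputable instance permModule : Module (MonoidAlgebra S G) (X →₀ S) :=
  Module.compHom _ (permAlgHom S G X).toRingHom

lemma permModule_smul_def (r : MonoidAlgebra S G) (f : X →₀ S) :
    r • f = permAlgHom S G X r f := rfl

instance : IsScalarTower S (MonoidAlgebra S G) (X →₀ S) :=
  ⟨fun s r f => by
    rw [permModule_smul_def, permModule_smul_def, map_smul, LinearMap.smul_apply]⟩


end Perm

/-- **Proposition 3.6 (permutation module case).** Let `G` be a finite group and `X` a finite
`G`-set.  If for each prime `p` the permutation module `𝔽_p X` over the group algebra `𝔽_p G`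
has the double centraliser property, then the permutation module `ℤX` over `ℤG` has the
double centraliser property. -/

private lemma divisible_all_of_divisible_primes (Q : Type*) [AddCommGroup Q]
    (hdiv : ∀ p : ℕ, p.Prime → ∀ q : Q, ∃ q', q = (p : ℤ) • q') :
    ∀ n : ℕ, 0 < n → ∀ q : Q, ∃ q', q = (n : ℤ) • q' := by
  intro n
  induction n using Nat.strong_induction_on with
  | _ n ih =>
    intro hn q
    rcases eq_or_ne n 1 with rfl | h1
    · exact ⟨q, by simp⟩
    · obtain ⟨p, hp, m, rfl⟩ := Nat.exists_prime_and_dvd h1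
      have hm : 0 < m := Nat.pos_of_ne_zero fun hm0 => by simp [hm0] at hn
      have hmlt : m < p * m := by nlinarith [hp.one_lt]
      obtain ⟨q1, hq1⟩ := ih m hmlt hm q
      obtain ⟨q2, hq2⟩ := hdiv p hp q1
      refine ⟨q2, ?_⟩
      rw [hq1, hq2, ← mul_smul]
      congr 1
      push_cast
      ring

private lemma fg_divisible_eq_zero (Q : Type*) [AddCommGroup Q] [Module.Finite ℤ Q]
    (hdiv : ∀ p : ℕ, p.Prime → ∀ q : Q, ∃ q', q = (p : ℤ) • q') (q : Q) : q = 0 := by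
  classical
  have hdivn := divisible_all_of_divisible_primes Q hdiv
  set T := Submodule.torsion ℤ Q with hT
  haveI : IsNoetherian ℤ Q := isNoetherian_of_isNoetherianRing_of_finite ℤ Q
  obtain ⟨s, hs⟩ := IsNoetherian.noetherian T
  have hsx : ∀ x ∈ s, ∃ a : ℤ, a ≠ 0 ∧ a • x = 0 := by
    intro x hx
    have hxT : x ∈ T := hs ▸ Submodule.subset_span hx
    obtain ⟨a, ha⟩ := (Submodule.mem_torsion_iff (R := ℤ) x).mp hxT
    exact ⟨(a : ℤ), mem_nonZeroDivisors_iff_ne_zero.mp a.2, by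
      have : (a : ℤ) • x = 0 := ha
      exact this⟩
  choose! c hc0 hc using hsx
  set e : ℤ := ∏ x ∈ s, c x with he
  have he0 : e ≠ 0 := by
    rw [he]
    exact Finset.prod_ne_zero_iff.mpr fun x hx => hc0 x hx
  have hann : ∀ t ∈ T, e • t = 0 := by
    have hker : T ≤ LinearMap.ker (LinearMap.lsmul ℤ Q e) := by
      rw [← hs, Submodule.span_le]
      intro x hx
      have hx' : x ∈ s := hx
      simp only [SetLike.mem_coe, LinearMap.mem_ker, LinearMap.lsmul_apply]
      obtain ⟨k, hk⟩ := Finset.dvd_prod_of_mem c hx'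
      rw [← he] at hk
      rw [hk, mul_comm, mul_smul, hc x hx', smul_zero]
    intro t ht
    simpa using hker ht
  have hFtf : ∀ (a : ℤ), a ≠ 0 → ∀ (y : Q ⧸ T), a • y = 0 → y = 0 := by
    intro a ha y hy
    obtain ⟨d, rfl⟩ := Submodule.Quotient.mk_surjective T y
    rw [← Submodule.Quotient.mk_smul, Submodule.Quotient.mk_eq_zero] at hy
    obtain ⟨b, hb⟩ := (Submodule.mem_torsion_iff (R := ℤ) _).mp hy
    rw [Submodule.Quotient.mk_eq_zero]
    refine (Submodule.mem_torsion_iff (R := ℤ) d).mpr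
      ⟨⟨(b : ℤ) * a, mul_mem b.2 (mem_nonZeroDivisors_iff_ne_zero.mpr ha)⟩, ?_⟩
    show ((b : ℤ) * a) • d = 0
    rw [mul_smul]
    exact hb
  haveI : NoZeroSMulDivisors ℤ (Q ⧸ T) := by
    refine ⟨fun {a y} hay => ?_⟩
    by_cases ha : a = 0
    · exact Or.inl ha
    · exact Or.inr (hFtf a ha y hay)
  haveI : Module.Finite ℤ (Q ⧸ T) := Module.Finite.quotient ℤ T
  haveI : Module.Free ℤ (Q ⧸ T) := Module.free_of_finite_type_torsion_free'
  have hqT : q ∈ T := by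
    rw [← Submodule.Quotient.mk_eq_zero]
    set b := Module.Free.chooseBasis ℤ (Q ⧸ T) with hb
    apply b.repr.injective
    ext i
    simp only [map_zero, Finsupp.zero_apply]
    by_contra hz
    set z := b.repr (Submodule.Quotient.mk q) i with hzdef
    obtain ⟨d, hd⟩ := hdivn (z.natAbs + 1) (Nat.succ_pos _) q
    have hmk : (Submodule.Quotient.mk q : Q ⧸ T)
        = ((z.natAbs + 1 : ℕ) : ℤ) • Submodule.Quotient.mk d := by
      rw [hd, Submodule.Quotient.mk_smul]
    have hzz : z = ((z.natAbs + 1 : ℕ) : ℤ) * b.repr (Submodule.Quotient.mk d) i := by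
      show (b.repr (Submodule.Quotient.mk q)) i = _
      rw [hmk, map_smul, Finsupp.smul_apply, smul_eq_mul]
    have hdvd : ((z.natAbs + 1 : ℕ) : ℤ) ∣ z := ⟨_, hzz⟩
    have hle : ((z.natAbs + 1 : ℕ) : ℤ) ≤ |z| :=
      Int.le_of_dvd (abs_pos.mpr hz) ((dvd_abs _ _).mpr hdvd)
    rw [Int.abs_eq_natAbs] at hle
    omega
  obtain ⟨d, hd⟩ := hdivn e.natAbs (Int.natAbs_pos.mpr he0) q
  have hdT : d ∈ T := by
    rw [← Submodule.Quotient.mk_eq_zero]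
    apply hFtf (e.natAbs : ℤ) (by exact_mod_cast (Int.natAbs_pos.mpr he0).ne')
    rw [← Submodule.Quotient.mk_smul, ← hd, Submodule.Quotient.mk_eq_zero]
    exact hqT
  have h1 : e • d = 0 := hann d hdT
  have h2 : (e.natAbs : ℤ) • d = 0 := by
    rcases Int.natAbs_eq e with hh | hh
    · rw [← hh]; exact h1
    · have h3 : (e.natAbs : ℤ) = -e := by omega
      rw [h3, neg_smul, h1, neg_zero]
  rw [hd, h2]

set_option maxHeartbeats 2000000 in
theorem intPermutationModule_hasDCP_of_prime_fields
    (G : Type*) [Group G] [Fintype G] (X : Type*) [Fintype X] [MulAction G X]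
    (h : ∀ p : ℕ, p.Prime →
      HasDCP (MonoidAlgebra (ZMod p) G) (X →₀ ZMod p)) :
    HasDCP (MonoidAlgebra ℤ G) (X →₀ ℤ) := by
  classical
  intro σ hσ
  let ν : MonoidAlgebra ℤ G →ₗ[ℤ] Module.End ℤ (X →₀ ℤ) := (permAlgHom ℤ G X).toLinearMap
  have hν : ∀ (r : MonoidAlgebra ℤ G) (m : X →₀ ℤ), ν r m = r • m := fun r m => rfl
  let A : Submodule ℤ (Module.End ℤ (X →₀ ℤ)) := LinearMap.range ν
  let D : Submodule ℤ (Module.End ℤ (X →₀ ℤ)) :=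
    { carrier := {τ | ∀ (α : (X →₀ ℤ) →ₗ[MonoidAlgebra ℤ G] (X →₀ ℤ)) (m : X →₀ ℤ),
        τ (α m) = α (τ m)}
      add_mem' := fun {τ1} {τ2} h1 h2 α m => by
        simp only [LinearMap.add_apply, h1 α m, h2 α m, map_add]
      zero_mem' := fun α m => by simp
      smul_mem' := fun c τ hτ α m => by
        simp only [LinearMap.smul_apply, hτ α m]
        exact (LinearMap.map_smul_of_tower α c (τ m)).symm }
  have hAD : A ≤ D := by
    rintro _ ⟨r, rfl⟩
    intro α m
    show ν r (α m) = α (ν r m)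
    rw [hν, hν]
    exact (map_smul α r m).symm
  let σℓ : Module.End ℤ (X →₀ ℤ) := σ.toIntLinearMap
  have hσD : σℓ ∈ D := fun α m => hσ α m
  have key : ∀ p : ℕ, p.Prime → ∀ δ, δ ∈ D → ∃ r : MonoidAlgebra ℤ G, ∃ τ, τ ∈ D ∧
      δ = ν r + (p : ℤ) • τ := by
    intro p hp δ hδ
    haveI : NeZero p := ⟨hp.pos.ne'⟩
    -- coefficient maps
    set ι : ℤ → ZMod p := fun n => (n : ZMod p) with hι
    have h0ι : ι 0 = 0 := by simp [hι]
    set ιv : ZMod p → ℤ := fun a => (a.val : ℤ) with hιv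
    have h0v : ιv 0 = 0 := by simp [hιv]
    have hvsec : ∀ a : ZMod p, ι (ιv a) = a := by
      intro a
      simp [hι, hιv, ZMod.natCast_val, ZMod.cast_id]
    -- reduction map
    let red : (X →₀ ℤ) →+ (X →₀ ZMod p) :=
      { toFun := fun x => Finsupp.mapRange ι h0ι x
        map_zero' := Finsupp.mapRange_zero
        map_add' := fun x y => Finsupp.mapRange_add (hf := h0ι) (fun a b => by simp [hι]) x y }
    have red_apply : ∀ (x : X →₀ ℤ) (t : X), red x t = ι (x t) := fun x t =>
      Finsupp.mapRange_apply (hf := h0ι)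
    -- section
    let liftF : (X →₀ ZMod p) → (X →₀ ℤ) := fun w => Finsupp.mapRange ιv h0v w
    have red_liftF : ∀ w, red (liftF w) = w := by
      intro w
      ext t
      rw [red_apply]
      rw [show (liftF w) t = ιv (w t) from Finsupp.mapRange_apply (hf := h0v)]
      exact hvsec _
    -- kernel of red
    have claim0 : ∀ x : X →₀ ℤ, red x = 0 → ∃ y, x = (p : ℤ) • y := by
      intro x hx
      refine ⟨Finsupp.mapRange (fun n : ℤ => n / p) (by simp) x, ?_⟩
      ext t
      have h1 : red x t = 0 := by rw [hx]; rfl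
      rw [red_apply] at h1
      have hdvd : (p : ℤ) ∣ x t := (ZMod.intCast_zmod_eq_zero_iff_dvd _ _).mp h1
      rw [Finsupp.smul_apply, show (Finsupp.mapRange (fun n : ℤ => n / p) (by simp) x) t
        = x t / p from Finsupp.mapRange_apply (hf := by simp), smul_eq_mul,
        Int.mul_ediv_cancel' hdvd]
    -- red kills p-multiples
    have red_p : ∀ z : X →₀ ℤ, red ((p : ℤ) • z) = 0 := by
      intro z
      ext t
      rw [red_apply, Finsupp.smul_apply, smul_eq_mul]
      show ((((p : ℤ) * z t : ℤ)) : ZMod p) = 0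
      push_cast
      simp
    -- red only depends on the class mod p, through any additive endomorphism
    have claim1 : ∀ (L : Module.End ℤ (X →₀ ℤ)) (x x' : X →₀ ℤ), red x = red x' →
        red (L x) = red (L x') := by
      intro L x x' hxx
      obtain ⟨y, hy⟩ := claim0 (x - x') (by rw [map_sub, hxx, sub_self])
      have hxeq : x = x' + (p : ℤ) • y := by rw [← hy]; abel
      have : L x = L x' + (p : ℤ) • L y := by rw [hxeq, map_add, map_smul]
      rw [this, map_add, red_p, add_zero]
    -- single smul formulas
    have hsmul_single_Z : ∀ (g : G) (cc : ℤ) (m : X →₀ ℤ),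
        MonoidAlgebra.single g cc • m
          = cc • Finsupp.mapDomain (fun x : X => g • x) m := by
      intro g cc m
      rw [permModule_smul_def]
      show (MonoidAlgebra.lift ℤ _ G (permRep ℤ G X)) (MonoidAlgebra.single g cc) m = _
      rw [MonoidAlgebra.lift_single]
      rfl
    have hsmul_single_P : ∀ (g : G) (cc : ZMod p) (m : X →₀ ZMod p),
        MonoidAlgebra.single g cc • m
          = cc • Finsupp.mapDomain (fun x : X => g • x) m := by
      intro g cc m
      rw [permModule_smul_def]
      show (MonoidAlgebra.lift (ZMod p) _ G (permRep (ZMod p) G X)) (MonoidAlgebra.single g cc) m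
        = _
      rw [MonoidAlgebra.lift_single]
      rfl
    -- red commutes with the permutation action
    have red_mapDomain : ∀ (g : G) (z : X →₀ ℤ),
        red (Finsupp.mapDomain (fun x : X => g • x) z)
          = Finsupp.mapDomain (fun x : X => g • x) (red z) := by
      intro g z
      exact (Finsupp.mapDomain_mapRange (fun x : X => g • x) z ι h0ι (fun a b => by simp [hι])).symm
    -- red is semilinear w.r.t. coefficient reduction
    have red_csmul : ∀ (cc : ℤ) (z : X →₀ ℤ), red (cc • z) = (cc : ZMod p) • red z := by
      intro cc z
      ext t
      rw [red_apply, Finsupp.smul_apply, Finsupp.smul_apply, red_apply, smul_eq_mul,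
        smul_eq_mul]
      show ((cc * z t : ℤ) : ZMod p) = (cc : ZMod p) * ((z t : ℤ) : ZMod p)
      push_cast
      ring
    let redG : MonoidAlgebra ℤ G → MonoidAlgebra (ZMod p) G := fun r => MonoidAlgebra.ofCoeff (Finsupp.mapRange ι h0ι r.coeff)
    have red_semilin : ∀ (r : MonoidAlgebra ℤ G) (m : X →₀ ℤ),
        red (r • m) = redG r • red m := by
      intro r
      induction r using MonoidAlgebra.induction_linear with
      | zero =>
        intro m
        rw [zero_smul, map_zero, show redG 0 = 0 from
          congrArg MonoidAlgebra.ofCoeff (Finsupp.mapRange_zero (f := ι)), zero_smul]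
      | add f g hf hg =>
        intro m
        rw [add_smul, map_add, hf, hg,
          show redG (f + g) = redG f + redG g from
            congrArg MonoidAlgebra.ofCoeff
              (Finsupp.mapRange_add (hf := h0ι) (fun a b => by simp [hι]) f.coeff g.coeff),
          add_smul]
      | single g cc =>
        intro m
        rw [hsmul_single_Z, red_csmul, red_mapDomain,
          show redG (MonoidAlgebra.single g cc) = MonoidAlgebra.single g (ι cc) from
            congrArg MonoidAlgebra.ofCoeff Finsupp.mapRange_single,
          hsmul_single_P]
    -- lifting of equivariant endomorphisms mod p
    have lift_exists : ∀ β : (X →₀ ZMod p) →ₗ[MonoidAlgebra (ZMod p) G] (X →₀ ZMod p),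
        ∃ Lβ : (X →₀ ℤ) →ₗ[MonoidAlgebra ℤ G] (X →₀ ℤ),
          ∀ x : X →₀ ℤ, red (Lβ x) = β (red x) := by
      intro β
      let v : X → (X →₀ ℤ) := fun y => liftF (β (Finsupp.single y 1))
      let F0 : (X →₀ ℤ) →ₗ[ℤ] (X →₀ ℤ) := Finsupp.linearCombination ℤ v
      have hF0single : ∀ (y : X) (cc : ℤ), F0 (Finsupp.single y cc) = cc • v y := by
        intro y cc
        exact Finsupp.linearCombination_single (R := ℤ) (v := v) cc y
      have hβg : ∀ (g : G) (w : X →₀ ZMod p),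
          β (Finsupp.mapDomain (fun x : X => g • x) w)
            = Finsupp.mapDomain (fun x : X => g • x) (β w) := by
        intro g w
        have h1 := hsmul_single_P g (1 : ZMod p) w
        have h2 := hsmul_single_P g (1 : ZMod p) (β w)
        rw [one_smul] at h1 h2
        rw [← h1, ← h2, map_smul]
      have hliftF_mapDomain : ∀ (g : G) (z : X →₀ ZMod p),
          liftF (Finsupp.mapDomain (fun x : X => g • x) z)
            = Finsupp.mapDomain (fun x : X => g • x) (liftF z) := by
        intro g z
        have hinj : Function.Injective (fun x : X => g • x) := MulAction.injective g
        show Finsupp.mapRange ιv h0v (Finsupp.mapDomain (fun x : X => g • x) z)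
          = Finsupp.mapDomain (fun x : X => g • x) (Finsupp.mapRange ιv h0v z)
        have E1 : Finsupp.embDomain ⟨fun x : X => g • x, hinj⟩ z
            = Finsupp.mapDomain (fun x : X => g • x) z :=
          Finsupp.embDomain_eq_mapDomain _ z
        have E2 : Finsupp.embDomain ⟨fun x : X => g • x, hinj⟩ (Finsupp.mapRange ιv h0v z)
            = Finsupp.mapDomain (fun x : X => g • x) (Finsupp.mapRange ιv h0v z) :=
          Finsupp.embDomain_eq_mapDomain _ _
        rw [← E1, ← Finsupp.embDomain_mapRange, E2]
      have hv : ∀ (g : G) (y : X), v (g • y)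
          = Finsupp.mapDomain (fun x : X => g • x) (v y) := by
        intro g y
        show liftF (β (Finsupp.single (g • y) 1)) = _
        rw [show (Finsupp.single (g • y) (1 : ZMod p))
            = Finsupp.mapDomain (fun x : X => g • x) (Finsupp.single y 1) from
            (Finsupp.mapDomain_single).symm,
          hβg, hliftF_mapDomain]
      have hF0g : ∀ (g : G) (x : X →₀ ℤ),
          F0 (Finsupp.mapDomain (fun x : X => g • x) x)
            = Finsupp.mapDomain (fun x : X => g • x) (F0 x) := by
        intro g x
        induction x using Finsupp.induction_linear with
        | zero => simp
        | add f f' hf hf' =>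
          rw [Finsupp.mapDomain_add, map_add, hf, hf', map_add, Finsupp.mapDomain_add]
        | single y cc =>
          rw [Finsupp.mapDomain_single, hF0single, hF0single, hv, Finsupp.mapDomain_smul]
      refine ⟨{ toFun := F0, map_add' := fun a b => map_add F0 a b, map_smul' := ?_ }, ?_⟩
      · intro r x
        simp only [RingHom.id_apply]
        induction r using MonoidAlgebra.induction_linear with
        | zero => rw [zero_smul, zero_smul, map_zero]
        | add f f' hf hf' => rw [add_smul, map_add, hf, hf', add_smul]
        | single g cc =>
          rw [hsmul_single_Z, map_smul, hF0g, hsmul_single_Z]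
      · intro x
        show red (F0 x) = β (red x)
        induction x using Finsupp.induction_linear with
        | zero => simp
        | add f f' hf hf' => rw [map_add, map_add, hf, hf', map_add, map_add]
        | single y cc =>
          rw [hF0single, red_csmul,
            show red (v y) = β (Finsupp.single y 1) from red_liftF _,
            show red (Finsupp.single y cc) = Finsupp.single y (ι cc) from
              Finsupp.mapRange_single (hf := h0ι),
            show (Finsupp.single y (ι cc) : X →₀ ZMod p)
              = (cc : ZMod p) • Finsupp.single y (1 : ZMod p) from by
                rw [Finsupp.smul_single, smul_eq_mul, mul_one],
            LinearMap.map_smul_of_tower]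
    -- the induced endomorphism mod p
    let sigp : (X →₀ ZMod p) →+ (X →₀ ZMod p) :=
      { toFun := fun w => red (δ (liftF w))
        map_zero' := by
          show red (δ (liftF 0)) = 0
          rw [show liftF 0 = 0 from Finsupp.mapRange_zero, map_zero, map_zero]
        map_add' := fun w1 w2 => by
          have e : red (liftF (w1 + w2)) = red (liftF w1 + liftF w2) := by
            rw [map_add, red_liftF, red_liftF, red_liftF]
          show red (δ (liftF (w1 + w2))) = red (δ (liftF w1)) + red (δ (liftF w2))
          rw [claim1 δ _ _ e, map_add, map_add] }
    have hcomm : ∀ (β : (X →₀ ZMod p) →ₗ[MonoidAlgebra (ZMod p) G] (X →₀ ZMod p))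
        (w : X →₀ ZMod p), sigp (β w) = β (sigp w) := by
      intro β w
      obtain ⟨Lβ, hLβ⟩ := lift_exists β
      have e1 : red (liftF (β w)) = red (Lβ (liftF w)) := by
        rw [red_liftF, hLβ, red_liftF]
      show red (δ (liftF (β w))) = β (red (δ (liftF w)))
      rw [claim1 δ _ _ e1, hδ Lβ (liftF w), hLβ]
    obtain ⟨rp, hrp⟩ := h p hp sigp hcomm
    -- lift of rp
    let rlift : MonoidAlgebra ℤ G := MonoidAlgebra.ofCoeff (Finsupp.mapRange ιv h0v rp.coeff)
    have hredr : redG rlift = rp := by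
      ext g
      show (Finsupp.mapRange ι h0ι (Finsupp.mapRange ιv h0v rp.coeff)) g = rp.coeff g
      rw [Finsupp.mapRange_apply (hf := h0ι), Finsupp.mapRange_apply (hf := h0v)]
      exact hvsec _
    -- δ agrees with rlift • · mod p
    have hzero : ∀ m : X →₀ ℤ, red (δ m - rlift • m) = 0 := by
      intro m
      rw [map_sub]
      have e1 : red (δ m) = sigp (red m) := by
        show _ = red (δ (liftF (red m)))
        exact claim1 δ _ _ (red_liftF (red m)).symm
      rw [e1, hrp, red_semilin, hredr, sub_self]
    -- divide by p
    have hpinj : ∀ (a b : X →₀ ℤ), (p : ℤ) • a = (p : ℤ) • b → a = b := by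
      intro a b hab
      ext t
      have h1 : ((p : ℤ) • a) t = ((p : ℤ) • b) t := by rw [hab]
      rw [Finsupp.smul_apply, Finsupp.smul_apply, smul_eq_mul, smul_eq_mul] at h1
      exact mul_left_cancel₀ (by exact_mod_cast hp.ne_zero) h1
    have hdvd : ∀ m : X →₀ ℤ, ∃ y, δ m - rlift • m = (p : ℤ) • y := fun m =>
      claim0 _ (hzero m)
    choose τf hτf using hdvd
    have hτsmul : ∀ m : X →₀ ℤ, (p : ℤ) • τf m = δ m - rlift • m := fun m => (hτf m).symm
    have hδ2 : ∀ (cc : ℤ) (m : X →₀ ℤ), δ (cc • m) - rlift • (cc • m)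
        = cc • (δ m - rlift • m) := by
      intro cc m
      rw [smul_sub, map_smul]
      congr 1
      rw [← hν, LinearMap.map_smul_of_tower, hν]
    have hδ2add : ∀ (m m' : X →₀ ℤ), δ (m + m') - rlift • (m + m')
        = (δ m - rlift • m) + (δ m' - rlift • m') := by
      intro m m'
      rw [map_add, ← hν, map_add (ν rlift), hν, hν]
      abel
    let τ : Module.End ℤ (X →₀ ℤ) :=
      { toFun := τf
        map_add' := fun a b => hpinj _ _ (by
          rw [smul_add, hτsmul, hτsmul, hτsmul, hδ2add])
        map_smul' := fun cc a => by
          simp only [RingHom.id_apply]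
          refine hpinj _ _ ?_
          rw [hτsmul, hδ2, ← hτsmul, smul_comm] }
    have hτD : τ ∈ D := by
      intro α m
      refine hpinj _ _ ?_
      have hνD : ν rlift ∈ D := hAD ⟨rlift, rfl⟩
      calc (p : ℤ) • τf (α m) = δ (α m) - rlift • (α m) := hτsmul _
        _ = α (δ m) - rlift • (α m) := by rw [hδ α m]
        _ = α (δ m) - α (rlift • m) := by rw [← hν, hνD α m, hν]
        _ = α (δ m - rlift • m) := (map_sub α _ _).symm
        _ = α ((p : ℤ) • τf m) := by rw [← hτsmul]
        _ = (p : ℤ) • α (τf m) := LinearMap.map_smul_of_tower α _ _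
    refine ⟨rlift, τ, hτD, ?_⟩
    refine LinearMap.ext fun m => ?_
    show δ m = ν rlift m + (p : ℤ) • τf m
    rw [hτsmul, hν]
    abel
  -- assembly
  haveI : Module.Finite ℤ (Module.End ℤ (X →₀ ℤ)) := by infer_instance
  haveI : IsNoetherian ℤ (Module.End ℤ (X →₀ ℤ)) :=
    isNoetherian_of_isNoetherianRing_of_finite ℤ _
  haveI : Module.Finite ℤ ↥D := Module.Finite.iff_fg.mpr (IsNoetherian.noetherian D)
  have hdivQ : ∀ p : ℕ, p.Prime → ∀ qq : (↥D ⧸ (A.comap D.subtype)),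
      ∃ qq', qq = (p : ℤ) • qq' := by
    intro p hp qq
    obtain ⟨⟨δ, hδ⟩, rfl⟩ := Submodule.Quotient.mk_surjective _ qq
    obtain ⟨r, τ, hτ, hdec⟩ := key p hp δ hδ
    refine ⟨Submodule.Quotient.mk ⟨τ, hτ⟩, ?_⟩
    rw [← Submodule.Quotient.mk_smul]
    rw [Submodule.Quotient.eq]
    refine Submodule.mem_comap.mpr ?_
    have hsub : D.subtype ((⟨δ, hδ⟩ : ↥D) - (p : ℤ) • (⟨τ, hτ⟩ : ↥D)) = ν r := by
      simp only [map_sub, map_smul, Submodule.coe_subtype]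
      rw [hdec]; abel
    rw [hsub]
    exact ⟨r, rfl⟩
  have hq0 := fg_divisible_eq_zero _ hdivQ (Submodule.Quotient.mk ⟨σℓ, hσD⟩)
  rw [Submodule.Quotient.mk_eq_zero] at hq0
  obtain ⟨r, hr⟩ := hq0
  refine ⟨r, fun m => ?_⟩
  have h2 : ν r = σℓ := hr
  show σℓ m = r • m
  rw [← hν r m, h2]
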